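/- If the Cesàro averages (1/(T+1)) Σ_{i=0}^T c(i) of a bounded sequence c converge to a limit L, then the normalized discounted values (1-λ) Σ_{i=0}^∞ λ^i c(i) converge to L as λ → 1⁻. -/

import Mathlib

open Filter

private lemma hs_aux {l : ℝ} (h0 : 0 ≤ l) (h1 : l < 1) :
    HasSum (fun i : ℕ => ((i : ℝ) + 1) * l ^ i) (1 / (1 - l) ^ 2) := by
  have hn : ‖l‖ < 1 := by rwa [Real.norm_eq_abs, abs_of_nonneg h0]
  have hne : (1 : ℝ) - l ≠ 0 := by intro h; nlinarith
  have hA := hasSum_coe_mul_geometric_of_norm_lt_one (𝕜 := ℝ) hn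
  have hB := hasSum_geometric_of_lt_one h0 h1
  have hC := hA.add hB
  have hf : (fun i : ℕ => ((i : ℝ) + 1) * l ^ i)
      = fun n : ℕ => (n : ℝ) * l ^ n + l ^ n := funext fun n => by ring
  have hv : 1 / (1 - l) ^ 2 = l / (1 - l) ^ 2 + (1 - l)⁻¹ := by field_simp; ring
  rw [hf, hv]; exact hC

private lemma summable_lin {l : ℝ} (h0 : 0 ≤ l) (h1 : l < 1) {b : ℕ → ℝ} {C : ℝ}
    (hb : ∀ i, |b i| ≤ C * ((i : ℝ) + 1)) : Summable (fun i : ℕ => l ^ i * b i) := by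
  refine Summable.of_norm_bounded (g := fun i : ℕ => C * (((i : ℝ) + 1) * l ^ i))
    ((hs_aux h0 h1).summable.mul_left C) ?_
  intro i
  rw [Real.norm_eq_abs, abs_mul, abs_pow, abs_of_nonneg h0]
  calc l ^ i * |b i| ≤ l ^ i * (C * ((i : ℝ) + 1)) :=
        mul_le_mul_of_nonneg_left (hb i) (pow_nonneg h0 i)
    _ = C * (((i : ℝ) + 1) * l ^ i) := by ring

set_option maxHeartbeats 1600000 in
/-- If the Cesàro averages of a bounded sequence `c` converge to
`L`, then the normalized discounted values converge to `L` as `λ → 1⁻`. -/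
theorem stmt_4 (c : ℕ → ℝ) (M : ℝ) (hM : ∀ i, |c i| ≤ M) (L : ℝ)
    (hces : Filter.Tendsto
      (fun T : ℕ => (∑ i ∈ Finset.range (T + 1), c i) / (T + 1))
      Filter.atTop (nhds L)) :
    Filter.Tendsto (fun l : ℝ => (1 - l) * (∑' i, l ^ i * c i))
      (nhdsWithin 1 (Set.Ico (0 : ℝ) 1)) (nhds L) := by
  set S : ℕ → ℝ := fun i => ∑ j ∈ Finset.range (i + 1), c j with hSdef
  have hM0 : 0 ≤ M := (abs_nonneg _).trans (hM 0)
  have hone : ∀ i : ℕ, (1 : ℝ) ≤ (i : ℝ) + 1 := fun i => by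
    have := Nat.cast_nonneg (α := ℝ) i; linarith
  have hSb : ∀ i, |S i| ≤ M * ((i : ℝ) + 1) := by
    intro i
    calc |S i| ≤ ∑ j ∈ Finset.range (i + 1), |c j| := Finset.abs_sum_le_sum_abs _ _
      _ ≤ ∑ _j ∈ Finset.range (i + 1), M := Finset.sum_le_sum fun j _ => hM j
      _ = M * ((i : ℝ) + 1) := by
          rw [Finset.sum_const, Finset.card_range, nsmul_eq_mul]; push_cast; ring
  set b : ℕ → ℝ := fun i => S i - L * ((i : ℝ) + 1) with hbdef
  have hcb : ∀ i, |c i| ≤ M * ((i : ℝ) + 1) := fun i =>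
    (hM i).trans (le_mul_of_one_le_right hM0 (hone i))
  have hbb : ∀ i, |b i| ≤ (M + |L|) * ((i : ℝ) + 1) := by
    intro i
    have h1 : |b i| ≤ |S i| + |L * ((i : ℝ) + 1)| := abs_sub _ _
    have h2 : |L * ((i : ℝ) + 1)| = |L| * ((i : ℝ) + 1) := by
      rw [abs_mul, abs_of_nonneg (a := (i : ℝ) + 1) (by linarith [hone i])]
    nlinarith [hSb i]
  -- key identity
  have key : ∀ l ∈ Set.Ico (0 : ℝ) 1,
      (1 - l) * (∑' i : ℕ, l ^ i * c i) - L = (1 - l) ^ 2 * (∑' i : ℕ, l ^ i * b i) := by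
    rintro l ⟨h0, h1⟩
    have hne : (1 : ℝ) - l ≠ 0 := by intro h; nlinarith
    have hgeo := hs_aux h0 h1
    have hSsum : Summable (fun i : ℕ => l ^ i * S i) := summable_lin h0 h1 hSb
    have hcsum : Summable (fun i : ℕ => l ^ i * c i) := summable_lin h0 h1 hcb
    have hc'sum : Summable (fun i : ℕ => l ^ i * c (i + 1)) := summable_lin h0 h1 fun i =>
      (hM _).trans (le_mul_of_one_le_right hM0 (hone i))
    have eS : ∀ i : ℕ, l ^ (i + 1) * S (i + 1) = l * (l ^ i * S i) + l * (l ^ i * c (i + 1)) := by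
      intro i
      simp only [hSdef]
      rw [Finset.sum_range_succ (n := i + 1)]
      ring
    have etail : (∑' i : ℕ, l ^ (i + 1) * S (i + 1))
        = l * (∑' i : ℕ, l ^ i * S i) + l * (∑' i : ℕ, l ^ i * c (i + 1)) :=
      calc (∑' i : ℕ, l ^ (i + 1) * S (i + 1))
          = ∑' i : ℕ, (l * (l ^ i * S i) + l * (l ^ i * c (i + 1))) := tsum_congr eS
        _ = (∑' i : ℕ, l * (l ^ i * S i)) + ∑' i : ℕ, l * (l ^ i * c (i + 1)) :=
            Summable.tsum_add (hSsum.mul_left l) (hc'sum.mul_left l)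
        _ = _ := by rw [tsum_mul_left, tsum_mul_left]
    have e1 : (∑' i : ℕ, l ^ i * S i)
        = S 0 + (l * (∑' i : ℕ, l ^ i * S i) + l * (∑' i : ℕ, l ^ i * c (i + 1))) := by
      have h := Summable.tsum_eq_zero_add hSsum
      simp only [pow_zero, one_mul] at h
      rw [← etail]; exact h
    have e3 : (∑' i : ℕ, l ^ i * c i) = c 0 + l * (∑' i : ℕ, l ^ i * c (i + 1)) := by
      have h := Summable.tsum_eq_zero_add hcsum
      simp only [pow_zero, one_mul] at h
      rw [h]
      congr 1
      calc (∑' i : ℕ, l ^ (i + 1) * c (i + 1)) = ∑' i : ℕ, l * (l ^ i * c (i + 1)) :=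
            tsum_congr fun i => by ring
        _ = l * (∑' i : ℕ, l ^ i * c (i + 1)) := tsum_mul_left
    have hS0 : S 0 = c 0 := by simp [hSdef]
    have step1 : (∑' i : ℕ, l ^ i * c i) = (1 - l) * (∑' i : ℕ, l ^ i * S i) := by
      rw [e3]; rw [hS0] at e1; linarith
    have e4 : (∑' i : ℕ, l ^ i * b i)
        = (∑' i : ℕ, l ^ i * S i) - L * (1 / (1 - l) ^ 2) := by
      calc (∑' i : ℕ, l ^ i * b i)
          = ∑' i : ℕ, (l ^ i * S i - L * (((i : ℝ) + 1) * l ^ i)) :=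
            tsum_congr fun i => by simp only [hbdef]; ring
        _ = (∑' i : ℕ, l ^ i * S i) - ∑' i : ℕ, L * (((i : ℝ) + 1) * l ^ i) :=
            Summable.tsum_sub hSsum (hgeo.summable.mul_left L)
        _ = _ := by rw [tsum_mul_left, hgeo.tsum_eq]
    rw [step1, e4]
    field_simp
  rw [← tendsto_sub_nhds_zero_iff]
  have main : Filter.Tendsto (fun l : ℝ => (1 - l) ^ 2 * (∑' i : ℕ, l ^ i * b i))
      (nhdsWithin 1 (Set.Ico (0 : ℝ) 1)) (nhds 0) := by
    rw [Metric.tendsto_nhdsWithin_nhds]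
    intro ε hε
    obtain ⟨N, hN⟩ := (Metric.tendsto_atTop.mp hces) (ε / 4) (by positivity)
    have hNb : ∀ i, N ≤ i → |b i| ≤ ε / 4 * ((i : ℝ) + 1) := by
      intro i hi
      have hd := hN i hi
      rw [Real.dist_eq] at hd
      have hpos : (0 : ℝ) < (i : ℝ) + 1 := by linarith [hone i]
      have hb' : b i
          = ((i : ℝ) + 1) * ((∑ j ∈ Finset.range (i + 1), c j) / ((i : ℝ) + 1) - L) := by
        simp only [hbdef, hSdef]
        field_simp
      rw [hb', abs_mul, abs_of_pos hpos]
      nlinarith [abs_nonneg ((∑ j ∈ Finset.range (i + 1), c j) / ((i : ℝ) + 1) - L)]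
    set CN := ∑ i ∈ Finset.range N, |b i| with hCN
    have hCN0 : 0 ≤ CN := Finset.sum_nonneg fun i _ => abs_nonneg _
    refine ⟨min 1 (ε / 4 / (CN + 1)), by positivity, ?_⟩
    rintro l ⟨h0, h1⟩ hd
    have hne : (1 : ℝ) - l ≠ 0 := by intro h; nlinarith
    rw [Real.dist_eq, abs_sub_comm, abs_of_nonneg (by linarith : (0 : ℝ) ≤ 1 - l)] at hd
    have habs : Summable (fun i : ℕ => l ^ i * |b i|) := summable_lin h0 h1 fun i => by
      rw [abs_abs]; exact hbb i
    have hnorm : |∑' i : ℕ, l ^ i * b i| ≤ ∑' i : ℕ, l ^ i * |b i| := by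
      have h := norm_tsum_le_tsum_norm (f := fun i : ℕ => l ^ i * b i) (by
        simpa [Real.norm_eq_abs, abs_mul, abs_pow, abs_of_nonneg h0] using habs)
      rw [Real.norm_eq_abs] at h
      refine h.trans (le_of_eq (tsum_congr fun i => ?_))
      rw [Real.norm_eq_abs, abs_mul, abs_pow, abs_of_nonneg h0]
    have hsplit : (∑' i : ℕ, l ^ i * |b i|) =
        (∑ i ∈ Finset.range N, l ^ i * |b i|) + ∑' i : ℕ, l ^ (i + N) * |b (i + N)| :=
      (Summable.sum_add_tsum_nat_add N habs).symm
    have hhead : (∑ i ∈ Finset.range N, l ^ i * |b i|) ≤ CN := by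
      apply Finset.sum_le_sum
      intro i _
      have hl1 : l ^ i ≤ 1 := pow_le_one₀ h0 h1.le
      nlinarith [abs_nonneg (b i), pow_nonneg h0 i]
    have hgeo := hs_aux h0 h1
    have htail : (∑' i : ℕ, l ^ (i + N) * |b (i + N)|) ≤ ε / 4 * (1 / (1 - l) ^ 2) := by
      have hsum1 : Summable (fun i : ℕ => l ^ (i + N) * |b (i + N)|) :=
        (summable_nat_add_iff N).mpr habs
      have hsum2 : Summable (fun i : ℕ => ε / 4 * ((((i + N : ℕ) : ℝ) + 1) * l ^ (i + N))) :=
        ((summable_nat_add_iff (f := fun j : ℕ => ((j : ℝ) + 1) * l ^ j) N).mpr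
          hgeo.summable).mul_left (ε / 4)
      have hle := Summable.tsum_le_tsum (f := fun i : ℕ => l ^ (i + N) * |b (i + N)|)
        (g := fun i : ℕ => ε / 4 * ((((i + N : ℕ) : ℝ) + 1) * l ^ (i + N)))
        (fun i => by
          have h1' := hNb (i + N) (by omega)
          have h2' : (0 : ℝ) ≤ l ^ (i + N) := pow_nonneg h0 _
          nlinarith) hsum1 hsum2
      refine hle.trans ?_
      rw [tsum_mul_left]
      have hsub : (∑' i : ℕ, ((((i + N : ℕ) : ℝ) + 1) * l ^ (i + N))) ≤ 1 / (1 - l) ^ 2 := by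
        have hfull := Summable.sum_add_tsum_nat_add (f := fun j : ℕ => ((j : ℝ) + 1) * l ^ j) N
          hgeo.summable
        rw [hgeo.tsum_eq] at hfull
        have hh : 0 ≤ ∑ i ∈ Finset.range N, (((i : ℝ) + 1) * l ^ i) :=
          Finset.sum_nonneg fun i _ => by positivity
        linarith [hfull]
      have hε4 : (0 : ℝ) ≤ ε / 4 := by positivity
      exact mul_le_mul_of_nonneg_left hsub hε4
    rw [Real.dist_eq, sub_zero, abs_mul, abs_of_nonneg (sq_nonneg (1 - l))]
    have hbound : |∑' i : ℕ, l ^ i * b i| ≤ CN + ε / 4 * (1 / (1 - l) ^ 2) := by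
      rw [hsplit] at hnorm
      linarith
    have hq : (1 - l) ^ 2 * |∑' i : ℕ, l ^ i * b i| ≤
        (1 - l) ^ 2 * (CN + ε / 4 * (1 / (1 - l) ^ 2)) :=
      mul_le_mul_of_nonneg_left hbound (sq_nonneg _)
    have heq : (1 - l) ^ 2 * (CN + ε / 4 * (1 / (1 - l) ^ 2)) = (1 - l) ^ 2 * CN + ε / 4 := by
      field_simp
    have hsq : (1 - l) ^ 2 ≤ 1 - l := by nlinarith
    have hδ2 : 1 - l < ε / 4 / (CN + 1) := lt_of_lt_of_le hd (min_le_right _ _)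
    have hδCN : (1 - l) * CN < ε / 4 := by
      have h' := (lt_div_iff₀ (by linarith : (0 : ℝ) < CN + 1)).mp hδ2
      nlinarith
    have hfin : (1 - l) ^ 2 * CN ≤ (1 - l) * CN :=
      mul_le_mul_of_nonneg_right hsq hCN0
    calc (1 - l) ^ 2 * |∑' i : ℕ, l ^ i * b i| ≤ (1 - l) ^ 2 * CN + ε / 4 := by
          rw [← heq]; exact hq
      _ < ε / 4 + ε / 4 := by linarith
      _ < ε := by linarith
  apply main.congr'
  filter_upwards [self_mem_nhdsWithin] with l hl
  exact (key l hl).symm
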